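/- The matrix t = (1/2)·[[j−k, 1−i], [−j−k, 1+i]] permutes the five MUB lines cyclically: it maps the line of (1,0) to the line of (1,−i), which maps to the line of (1,k), then to the line of (1,−1), then to the line of (1,j), then back to the line of (1,0). Concretely, t·(1,0)ᵀ is a right scalar multiple of (1,−i)ᵀ, t·(1,−i)ᵀ is a right scalar multiple of (1,k)ᵀ, t·(1,k)ᵀ of (1,−1)ᵀ, t·(1,−1)ᵀ of (1,j)ᵀ, and t·(1,j)ᵀ of (1,0)ᵀ. -/

import Mathlib

noncomputable section
open Quaternion Matrix

abbrev HQ := ℍ[ℝ]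
def qi : HQ := ⟨0,1,0,0⟩
def qj : HQ := ⟨0,0,1,0⟩
def qk : HQ := ⟨0,0,0,1⟩

/-- Inner product on the right ℍ-module ℍ^d. -/
def inprod {d : ℕ} (v w : Fin d → HQ) : HQ := ∑ m, star (v m) * w m


/-- The matrix t = (1/2)[[j−k, 1−i],[−j−k, 1+i]]. -/
def tMat : Matrix (Fin 2) (Fin 2) HQ :=
  (((2:ℝ)⁻¹ : HQ)) • !![qj - qk, 1 - qi; -qj - qk, 1 + qi]

/-- A maps the line of v to the line of w: Av is a nonzero right scalar
multiple of w. -/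
def MapsLine (A : Matrix (Fin 2) (Fin 2) HQ) (v w : Fin 2 → HQ) : Prop :=
  ∃ lam : HQ, lam ≠ 0 ∧ A.mulVec v = fun m => w m * lam

def mkH (a b c d : ℝ) : HQ := ⟨a,b,c,d⟩
@[simp] lemma mkH_re (a b c d : ℝ) : (mkH a b c d).re = a := rfl
@[simp] lemma mkH_imI (a b c d : ℝ) : (mkH a b c d).imI = b := rfl
@[simp] lemma mkH_imJ (a b c d : ℝ) : (mkH a b c d).imJ = c := rfl
@[simp] lemma mkH_imK (a b c d : ℝ) : (mkH a b c d).imK = d := rfl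
lemma qi_eq : qi = mkH 0 1 0 0 := rfl
lemma qj_eq : qj = mkH 0 0 1 0 := rfl
lemma qk_eq : qk = mkH 0 0 0 1 := rfl

set_option maxHeartbeats 1000000 in
/-- t cyclically permutes the five MUB lines:
(1,0) → (1,−i) → (1,k) → (1,−1) → (1,j) → (1,0). -/
theorem tMat_cycles_MUB_lines :
    MapsLine tMat ![1, 0] ![1, -qi] ∧
    MapsLine tMat ![1, -qi] ![1, qk] ∧
    MapsLine tMat ![1, qk] ![1, -1] ∧
    MapsLine tMat ![1, -1] ![1, qj] ∧
    MapsLine tMat ![1, qj] ![1, 0] := by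
  refine ⟨⟨(mkH 0 0 (1/2) (-1/2)), ?_, ?_⟩,
          ⟨(mkH (-1/2) (-1/2) (1/2) (-1/2)), ?_, ?_⟩,
          ⟨(mkH 0 0 1 0), ?_, ?_⟩,
          ⟨(mkH (-1/2) (1/2) (1/2) (-1/2)), ?_, ?_⟩,
          ⟨(mkH 0 0 1 (-1)), ?_, ?_⟩⟩ <;>
    first
    | (intro h; rw [Quaternion.ext_iff] at h; norm_num at h)
    | (funext m; fin_cases m <;>
        · simp only [tMat, Matrix.mulVec, dotProduct, Fin.sum_univ_two,
            Matrix.smul_apply, Matrix.cons_val', Matrix.cons_val_zero,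
            Matrix.cons_val_one, Matrix.head_cons, Matrix.head_fin_const,
            Matrix.empty_val', Matrix.cons_val_fin_one, smul_eq_mul]
          rw [Quaternion.ext_iff]
          simp [qi_eq, qj_eq, qk_eq, ← Quaternion.coe_inv, Quaternion.re_coe, Quaternion.imI_coe,
            Quaternion.imJ_coe, Quaternion.imK_coe, Quaternion.re_mul, Quaternion.imI_mul,
            Quaternion.imJ_mul, Quaternion.imK_mul]
          try norm_num)
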